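/- Let M be an ergodic Markov chain on a finite state space Ω with transition matrix P and stationary distribution π. Suppose A ⊆ Ω and M₀ ⊆ Ω \ A satisfy π(A) ≤ 1/2 and P(ω₁, ω₂) = 0 whenever ω₁ ∈ A and ω₂ ∈ Ω \ (A ∪ M₀). Then the mixing time τ of the chain (the least t such that the total variation distance of P^t from π, maximized over starting states, is at most 1/e) satisfies τ ≥ π(A)/(8 π(M₀)). -/

import Mathlib

namespace DFJaux
open Finset
set_option linter.unusedSectionVars false
section aux
variable {Ω : Type*} [Fintype Ω] [DecidableEq Ω]

lemma pow_nn (P : Matrix Ω Ω ℝ) (hP0 : ∀ ω ω', 0 ≤ P ω ω') (t : ℕ) :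
    ∀ ω ω', 0 ≤ (P ^ t) ω ω' := by
  induction t with
  | zero => intro ω ω'; rw [pow_zero, Matrix.one_apply]; split <;> norm_num
  | succ t ih =>
      intro ω ω'
      rw [pow_succ, Matrix.mul_apply]
      exact Finset.sum_nonneg fun x _ => mul_nonneg (ih ω x) (hP0 x ω')

lemma pow_row (P : Matrix Ω Ω ℝ) (hP1 : ∀ ω, ∑ ω', P ω ω' = 1) (t : ℕ) :
    ∀ ω, ∑ ω', (P ^ t) ω ω' = 1 := by
  induction t with
  | zero => intro ω; simp [Matrix.one_apply]
  | succ t ih =>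
      intro ω
      simp only [pow_succ, Matrix.mul_apply]
      rw [Finset.sum_comm]
      calc ∑ x, ∑ ω', (P ^ t) ω x * P x ω'
          = ∑ x, (P ^ t) ω x * ∑ ω', P x ω' := by simp [Finset.mul_sum]
        _ = 1 := by simp [hP1, ih ω]

lemma pow_stat (P : Matrix Ω Ω ℝ) (π : Ω → ℝ)
    (hstat : ∀ ω', ∑ ω, π ω * P ω ω' = π ω') (t : ℕ) :
    ∀ ω', ∑ ω, π ω * (P ^ t) ω ω' = π ω' := by
  induction t with
  | zero => intro ω'; simp [Matrix.one_apply]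
  | succ t ih =>
      intro ω'
      simp only [pow_succ, Matrix.mul_apply]
      calc ∑ ω, π ω * ∑ x, (P ^ t) ω x * P x ω'
          = ∑ ω, ∑ x, π ω * (P ^ t) ω x * P x ω' := by
            simp [Finset.mul_sum, mul_assoc]
        _ = ∑ x, (∑ ω, π ω * (P ^ t) ω x) * P x ω' := by
            rw [Finset.sum_comm]; simp [Finset.sum_mul]
        _ = π ω' := by simp [ih, hstat ω']

lemma contract_step (R : Matrix Ω Ω ℝ) (π : Ω → ℝ)
    (hπ0 : ∀ x, 0 ≤ π x) (hπ1 : ∑ x, π x = 1)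
    (hR1 : ∀ x, ∑ y, R x y = 1) (hRstat : ∀ y, ∑ x, π x * R x y = π y)
    (ε : ℝ) (hε0 : 0 ≤ ε) (hεR : ∀ x y, ε ≤ R x y)
    (μ : Ω → ℝ) (hμ1 : ∑ x, μ x = 1) :
    ∑ y, |(∑ x, μ x * R x y) - π y| ≤ (1 - ε) * ∑ x, |μ x - π x| := by
  have hπle1 : ∀ y, π y ≤ 1 := by
    intro y
    rw [← hπ1]
    exact Finset.single_le_sum (fun x _ => hπ0 x) (mem_univ y)
  have hfac : ∀ x y, 0 ≤ R x y - ε * π y := by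
    intro x y
    have : ε * π y ≤ ε * 1 := mul_le_mul_of_nonneg_left (hπle1 y) hε0
    have h2 := hεR x y
    linarith
  have key : ∀ y, (∑ x, μ x * R x y) - π y
      = ∑ x, (μ x - π x) * (R x y - ε * π y) := by
    intro y
    have expand : ∀ x, (μ x - π x) * (R x y - ε * π y)
        = μ x * R x y - π x * R x y - (ε * π y) * μ x + (ε * π y) * π x :=
      fun x => by ring
    simp_rw [expand]
    rw [Finset.sum_add_distrib, Finset.sum_sub_distrib, Finset.sum_sub_distrib,
      ← Finset.mul_sum, ← Finset.mul_sum, hμ1, hπ1, hRstat y]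
    ring
  calc ∑ y, |(∑ x, μ x * R x y) - π y|
      ≤ ∑ y, ∑ x, |μ x - π x| * (R x y - ε * π y) := by
        apply Finset.sum_le_sum
        intro y _
        rw [key y]
        refine (Finset.abs_sum_le_sum_abs _ _).trans ?_
        apply Finset.sum_le_sum
        intro x _
        rw [abs_mul, abs_of_nonneg (hfac x y)]
    _ = ∑ x, |μ x - π x| * (1 - ε) := by
        rw [Finset.sum_comm]
        congr 1
        ext x
        rw [← Finset.mul_sum, Finset.sum_sub_distrib, hR1 x, ← Finset.mul_sum, hπ1, mul_one]
    _ = (1 - ε) * ∑ x, |μ x - π x| := by rw [← Finset.sum_mul]; ring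

lemma mixing_exists [Nonempty Ω] (P : Matrix Ω Ω ℝ)
    (hP0 : ∀ ω ω', 0 ≤ P ω ω') (hP1 : ∀ ω, ∑ ω', P ω ω' = 1)
    (π : Ω → ℝ) (hπ0 : ∀ ω, 0 ≤ π ω) (hπ1 : ∑ ω, π ω = 1)
    (hstat : ∀ ω', ∑ ω, π ω * P ω ω' = π ω')
    (hergodic : ∃ t : ℕ, ∀ ω ω', 0 < (P ^ t) ω ω') :
    ∃ t : ℕ, ∀ ω : Ω,
      (1 / 2) * ∑ ω', |(P ^ t) ω ω' - π ω'| ≤ (Real.exp 1)⁻¹ := by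
  obtain ⟨t₀, ht₀⟩ := hergodic
  set R := P ^ t₀ with hR
  have hRnn : ∀ x y, 0 ≤ R x y := pow_nn P hP0 t₀
  have hR1 : ∀ x, ∑ y, R x y = 1 := pow_row P hP1 t₀
  have hRstat : ∀ y, ∑ x, π x * R x y = π y := pow_stat P π hstat t₀
  -- define ε
  set ε' : ℝ := Finset.univ.inf' Finset.univ_nonempty (fun p : Ω × Ω => R p.1 p.2) with hε'
  have hε'pos : 0 < ε' := by
    rw [hε', Finset.lt_inf'_iff]
    intro p _
    exact ht₀ p.1 p.2
  have hε'le : ∀ x y, ε' ≤ R x y := by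
    intro x y
    exact Finset.inf'_le _ (mem_univ (⟨x, y⟩ : Ω × Ω))
  set ε : ℝ := min ε' (1/2) with hεdef
  have hε0 : 0 < ε := lt_min hε'pos (by norm_num)
  have hεhalf : ε ≤ 1/2 := min_le_right _ _
  have hεR : ∀ x y, ε ≤ R x y := fun x y => (min_le_left _ _).trans (hε'le x y)
  -- iterate contraction
  have hiter : ∀ k : ℕ, ∀ ω, ∑ y, |(P ^ (t₀ * k)) ω y - π y| ≤ 2 * (1 - ε) ^ k := by
    intro k
    induction k with
    | zero =>
        intro ω
        simp only [Nat.mul_zero, pow_zero]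
        calc ∑ y, |(1 : Matrix Ω Ω ℝ) ω y - π y|
            ≤ ∑ y, ((1 : Matrix Ω Ω ℝ) ω y + π y) := by
              apply Finset.sum_le_sum
              intro y _
              refine (abs_sub _ _).trans ?_
              rw [abs_of_nonneg, abs_of_nonneg (hπ0 y)]
              rw [Matrix.one_apply]; split <;> norm_num
          _ = 2 := by
              rw [Finset.sum_add_distrib, hπ1]
              have : ∑ y, (1 : Matrix Ω Ω ℝ) ω y = 1 := by simp [Matrix.one_apply]
              rw [this]; norm_num
          _ ≤ 2 * (1 - ε) ^ 0 := by norm_num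
    | succ k ih =>
        intro ω
        have hpow : P ^ (t₀ * (k + 1)) = P ^ (t₀ * k) * R := by
          rw [hR, ← pow_add]
          ring_nf
        have happ : ∀ y, (P ^ (t₀ * (k + 1))) ω y
            = ∑ x, (P ^ (t₀ * k)) ω x * R x y := by
          intro y; rw [hpow, Matrix.mul_apply]
        calc ∑ y, |(P ^ (t₀ * (k + 1))) ω y - π y|
            = ∑ y, |(∑ x, (P ^ (t₀ * k)) ω x * R x y) - π y| := by
              simp_rw [happ]
          _ ≤ (1 - ε) * ∑ x, |(P ^ (t₀ * k)) ω x - π x| :=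
              contract_step R π hπ0 hπ1 hR1 hRstat ε hε0.le hεR
                ((P ^ (t₀ * k)) ω) (pow_row P hP1 (t₀ * k) ω)
          _ ≤ (1 - ε) * (2 * (1 - ε) ^ k) := by
              apply mul_le_mul_of_nonneg_left (ih ω)
              linarith
          _ = 2 * (1 - ε) ^ (k + 1) := by ring
  -- choose k
  obtain ⟨k, hk⟩ := exists_pow_lt_of_lt_one (by positivity : (0:ℝ) < (Real.exp 1)⁻¹)
    (by linarith : (1 : ℝ) - ε < 1)
  refine ⟨t₀ * k, fun ω => ?_⟩
  have := hiter k ω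
  linarith

lemma escape_bound (P : Matrix Ω Ω ℝ)
    (hP0 : ∀ ω ω', 0 ≤ P ω ω') (hP1 : ∀ ω, ∑ ω', P ω ω' = 1)
    (π : Ω → ℝ) (hπ0 : ∀ ω, 0 ≤ π ω)
    (hstat : ∀ ω', ∑ ω, π ω * P ω ω' = π ω')
    (A M₀ : Finset Ω) (hdisj : ∀ ω ∈ M₀, ω ∉ A)
    (hblock : ∀ ω₁ ∈ A, ∀ ω₂, ω₂ ∉ A → ω₂ ∉ M₀ → P ω₁ ω₂ = 0)
    (hpow_nn : ∀ t ω ω', 0 ≤ (P ^ t) ω ω')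
    (hpow_row : ∀ t ω, ∑ ω', (P ^ t) ω ω' = 1) :
    ∀ t : ℕ, ∑ ω ∈ A, π ω * (∑ ω' ∈ Aᶜ, (P ^ t) ω ω')
      ≤ t * ∑ ω ∈ M₀, π ω := by
  intro t
  induction t with
  | zero =>
      have : ∀ ω ∈ A, π ω * (∑ ω' ∈ Aᶜ, (P ^ 0) ω ω') = 0 := by
        intro ω hω
        have : ∑ ω' ∈ Aᶜ, (P ^ 0) ω ω' = 0 := by
          apply Finset.sum_eq_zero
          intro ω' hω'
          rw [pow_zero, Matrix.one_apply]
          rw [Finset.mem_compl] at hω'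
          have : ω ≠ ω' := fun h => hω' (h ▸ hω)
          simp [this]
        rw [this, mul_zero]
      rw [Finset.sum_congr rfl this]
      simp
  | succ t ih =>
      set m := ∑ ω ∈ M₀, π ω with hm
      set f : Ω → ℝ := fun x => ∑ ω' ∈ Aᶜ, (P ^ t) x ω' with hf
      have hf0 : ∀ x, 0 ≤ f x := fun x =>
        Finset.sum_nonneg fun ω' _ => hpow_nn t x ω'
      have hf1 : ∀ x, f x ≤ 1 := by
        intro x
        rw [← hpow_row t x]
        exact Finset.sum_le_sum_of_subset_of_nonneg (Finset.subset_univ _)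
          (fun ω' _ _ => hpow_nn t x ω')
      have hstep : ∀ ω, ∑ ω' ∈ Aᶜ, (P ^ (t+1)) ω ω' = ∑ x, P ω x * f x := by
        intro ω
        have : ∀ ω', (P ^ (t+1)) ω ω' = ∑ x, P ω x * (P ^ t) x ω' := by
          intro ω'; rw [pow_succ', Matrix.mul_apply]
        simp_rw [this, hf]
        rw [Finset.sum_comm]
        simp [Finset.mul_sum]
      -- the inner flow sums
      have hflow : ∀ x, ∑ ω ∈ A, π ω * P ω x ≤ π x := by
        intro x
        rw [← hstat x]
        exact Finset.sum_le_sum_of_subset_of_nonneg (Finset.subset_univ _)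
          (fun ω _ _ => mul_nonneg (hπ0 ω) (hP0 ω x))
      have hflow0 : ∀ x, 0 ≤ ∑ ω ∈ A, π ω * P ω x := fun x =>
        Finset.sum_nonneg fun ω _ => mul_nonneg (hπ0 ω) (hP0 ω x)
      calc ∑ ω ∈ A, π ω * (∑ ω' ∈ Aᶜ, (P ^ (t+1)) ω ω')
          = ∑ ω ∈ A, ∑ x, π ω * P ω x * f x := by
            apply Finset.sum_congr rfl
            intro ω _
            rw [hstep ω, Finset.mul_sum]
            simp [mul_assoc]
        _ = ∑ x, (∑ ω ∈ A, π ω * P ω x) * f x := by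
            rw [Finset.sum_comm]
            simp [Finset.sum_mul]
        _ = ∑ x ∈ A, (∑ ω ∈ A, π ω * P ω x) * f x
            + ∑ x ∈ Aᶜ, (∑ ω ∈ A, π ω * P ω x) * f x := by
            rw [Finset.sum_add_sum_compl]
        _ ≤ (∑ x ∈ A, π x * f x) + m := by
            apply add_le_add
            · exact Finset.sum_le_sum fun x _ =>
                mul_le_mul_of_nonneg_right (hflow x) (hf0 x)
            · calc ∑ x ∈ Aᶜ, (∑ ω ∈ A, π ω * P ω x) * f x
                  ≤ ∑ x ∈ Aᶜ, (if x ∈ M₀ then π x else 0) := by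
                    apply Finset.sum_le_sum
                    intro x hx
                    rw [Finset.mem_compl] at hx
                    by_cases hxM : x ∈ M₀
                    · simp only [hxM, if_true]
                      calc (∑ ω ∈ A, π ω * P ω x) * f x
                          ≤ (∑ ω ∈ A, π ω * P ω x) * 1 :=
                            mul_le_mul_of_nonneg_left (hf1 x) (hflow0 x)
                        _ = ∑ ω ∈ A, π ω * P ω x := mul_one _
                        _ ≤ π x := hflow x
                    · simp only [hxM, if_false]
                      have : ∑ ω ∈ A, π ω * P ω x = 0 := by
                        apply Finset.sum_eq_zero
                        intro ω hω
                        rw [hblock ω hω x hx hxM, mul_zero]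
                      rw [this, zero_mul]
                _ = ∑ x ∈ Aᶜ ∩ M₀, π x := by
                    rw [Finset.sum_ite_mem]
                _ = m := by
                    congr 1
                    apply Finset.inter_eq_right.mpr
                    intro x hx
                    exact Finset.mem_compl.mpr (hdisj x hx)
        _ ≤ ((t : ℝ) * m + m) := add_le_add_left ih m
        _ = (t + 1 : ℕ) * m := by push_cast; ring

end aux
end DFJaux

/-- Conductance (bottleneck) lower bound on mixing time (Dyer–Frieze–Jerrum).
Let `P` be the transition matrix of an ergodic Markov chain on a finite state
space `Ω` with stationary distribution `π`.  If `A ⊆ Ω` and `M₀ ⊆ Ω \ A`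
satisfy `π(A) ≤ 1/2` and `P(ω₁,ω₂) = 0` whenever `ω₁ ∈ A` and
`ω₂ ∈ Ω \ (A ∪ M₀)`, then the mixing time `τ` (least `t` such that the total
variation distance of `P^t` from `π`, maximised over starting states, is at
most `1/e`) satisfies `τ ≥ π(A) / (8 π(M₀))`. -/
theorem conductance_mixing_lower_bound
    {Ω : Type*} [Fintype Ω] [DecidableEq Ω] [Nonempty Ω]
    (P : Matrix Ω Ω ℝ)
    (hP0 : ∀ ω ω', 0 ≤ P ω ω') (hP1 : ∀ ω, ∑ ω', P ω ω' = 1)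
    (π : Ω → ℝ) (hπ0 : ∀ ω, 0 ≤ π ω) (hπ1 : ∑ ω, π ω = 1)
    (hstat : ∀ ω', ∑ ω, π ω * P ω ω' = π ω')
    (hergodic : ∃ t : ℕ, ∀ ω ω', 0 < (P ^ t) ω ω')
    (A M₀ : Finset Ω) (hdisj : ∀ ω ∈ M₀, ω ∉ A)
    (hA : ∑ ω ∈ A, π ω ≤ 1 / 2)
    (hblock : ∀ ω₁ ∈ A, ∀ ω₂, ω₂ ∉ A → ω₂ ∉ M₀ → P ω₁ ω₂ = 0)
    (hM₀ : 0 < ∑ ω ∈ M₀, π ω)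
    (τ : ℕ)
    (hτ : τ = sInf {t : ℕ | ∀ ω : Ω,
      (1 / 2) * ∑ ω', |(P ^ t) ω ω' - π ω'| ≤ (Real.exp 1)⁻¹}) :
    (∑ ω ∈ A, π ω) / (8 * ∑ ω ∈ M₀, π ω) ≤ (τ : ℝ) := by
  classical
  have hpnn := DFJaux.pow_nn P hP0
  have hprow := DFJaux.pow_row P hP1
  set a := ∑ ω ∈ A, π ω with ha
  set m := ∑ ω ∈ M₀, π ω with hm
  have ha0 : 0 ≤ a := Finset.sum_nonneg fun ω _ => hπ0 ω
  rcases eq_or_lt_of_le ha0 with h0 | hapos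
  · rw [← h0, zero_div]
    positivity
  · have htauS : ∀ ω, (1/2) * ∑ ω', |(P ^ τ) ω ω' - π ω'| ≤ (Real.exp 1)⁻¹ := by
      obtain ⟨t, ht⟩ := DFJaux.mixing_exists P hP0 hP1 π hπ0 hπ1 hstat hergodic
      have hmem : τ ∈ {t : ℕ | ∀ ω : Ω,
          (1 / 2) * ∑ ω', |(P ^ t) ω ω' - π ω'| ≤ (Real.exp 1)⁻¹} := by
        rw [hτ]
        exact Nat.sInf_mem ⟨t, ht⟩
      exact hmem
    have hesc := DFJaux.escape_bound P hP0 hP1 π hπ0 hstat A M₀ hdisj hblock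
      hpnn hprow τ
    have hAne : A.Nonempty := by
      by_contra h
      rw [Finset.not_nonempty_iff_eq_empty] at h
      rw [ha, h, Finset.sum_empty] at hapos
      exact lt_irrefl 0 hapos
    obtain ⟨ω₀, hω₀A, hmin⟩ :=
      A.exists_min_image (fun ω => ∑ ω' ∈ Aᶜ, (P ^ τ) ω ω') hAne
    set f₀ := ∑ ω' ∈ Aᶜ, (P ^ τ) ω₀ ω' with hf₀
    have h1 : f₀ * a ≤ τ * m := by
      calc f₀ * a = ∑ ω ∈ A, π ω * f₀ := by
            rw [mul_comm, ha, Finset.sum_mul]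
        _ ≤ ∑ ω ∈ A, π ω * (∑ ω' ∈ Aᶜ, (P ^ τ) ω ω') :=
            Finset.sum_le_sum fun ω hω =>
              mul_le_mul_of_nonneg_left (hmin ω hω) (hπ0 ω)
        _ ≤ τ * m := hesc
    have htot : ∑ ω', ((P ^ τ) ω₀ ω' - π ω') = 0 := by
      rw [Finset.sum_sub_distrib, hprow τ ω₀, hπ1]
      ring
    have hsplit : (∑ ω' ∈ A, ((P ^ τ) ω₀ ω' - π ω'))
        + (∑ ω' ∈ Aᶜ, ((P ^ τ) ω₀ ω' - π ω')) = 0 := by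
      rw [Finset.sum_add_sum_compl]
      exact htot
    have hπcompl : ∑ ω' ∈ Aᶜ, π ω' = 1 - a := by
      have := Finset.sum_add_sum_compl A π
      rw [hπ1] at this
      linarith
    have hAc : ∑ ω' ∈ Aᶜ, ((P ^ τ) ω₀ ω' - π ω') = f₀ - (1 - a) := by
      rw [Finset.sum_sub_distrib, hπcompl, hf₀]
    have habs : (1 - a) - f₀ ≤ (1/2) * ∑ ω', |(P ^ τ) ω₀ ω' - π ω'| := by
      have e1 : |∑ ω' ∈ Aᶜ, ((P ^ τ) ω₀ ω' - π ω')|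
          ≤ ∑ ω' ∈ Aᶜ, |(P ^ τ) ω₀ ω' - π ω'| :=
        Finset.abs_sum_le_sum_abs _ _
      have e2 : |∑ ω' ∈ A, ((P ^ τ) ω₀ ω' - π ω')|
          ≤ ∑ ω' ∈ A, |(P ^ τ) ω₀ ω' - π ω'| :=
        Finset.abs_sum_le_sum_abs _ _
      have e3 : (∑ ω' ∈ A, |(P ^ τ) ω₀ ω' - π ω'|)
          + ∑ ω' ∈ Aᶜ, |(P ^ τ) ω₀ ω' - π ω'|
          = ∑ ω', |(P ^ τ) ω₀ ω' - π ω'| :=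
        Finset.sum_add_sum_compl A _
      have e4 : |∑ ω' ∈ A, ((P ^ τ) ω₀ ω' - π ω')|
          = |∑ ω' ∈ Aᶜ, ((P ^ τ) ω₀ ω' - π ω')| := by
        have : ∑ ω' ∈ A, ((P ^ τ) ω₀ ω' - π ω')
            = -(∑ ω' ∈ Aᶜ, ((P ^ τ) ω₀ ω' - π ω')) := by linarith
        rw [this, abs_neg]
      have e5 : (1 - a) - f₀ ≤ |∑ ω' ∈ Aᶜ, ((P ^ τ) ω₀ ω' - π ω')| := by
        rw [hAc]
        have := neg_le_abs (f₀ - (1 - a))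
        linarith
      linarith
    have he : (Real.exp 1)⁻¹ ≤ 3/8 := by
      have h83 : (8/3 : ℝ) ≤ Real.exp 1 := by
        have := Real.exp_one_gt_d9
        linarith
      calc (Real.exp 1)⁻¹ ≤ ((8:ℝ)/3)⁻¹ :=
            inv_anti₀ (by norm_num) h83
        _ ≤ 3/8 := by norm_num
    have hfb : 1/8 ≤ f₀ := by
      have := htauS ω₀
      linarith
    have key : a ≤ (τ : ℝ) * (8 * m) := by
      have h2 : (1/8) * a ≤ f₀ * a :=
        mul_le_mul_of_nonneg_right hfb ha0
      nlinarith
    rw [div_le_iff₀ (by positivity : (0:ℝ) < 8 * m)]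
    exact key
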